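/- Define g : ℤⁿ → ℤⁿ as follows. For ω = (ω_1,…,ω_n), first set ω′_1 = ω_1 and, for 2 ≤ i ≤ n, ω′_i = ω_{i−1} if ω_{i−1} − ω_i is even and ω′_i = ω_{i−1} − 1 if ω_{i−1} − ω_i is odd. Then let X = {i : 2 ≤ i ≤ n, ω_{i−1} ≠ ω′_i}, let X′ = X if #X is even and X′ = X minus its maximal element if #X is odd, and set g(ω)_i = ω′_i + 1 if i ∈ X′ and g(ω)_i = ω′_i otherwise. Then for every dominant ω ∈ ℤⁿ (ω_1 ≥ … ≥ ω_n), the quantity j(ω) = #{ℓ : ω_ℓ ≡ ω_1 (mod 2)} satisfies j(g(ω)) = j(ω). -/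

import Mathlib

/-- First step of the operation: `ω′₁ = ω₁`; for `i ≥ 2`, `ω′ᵢ = ω_{i−1}` if
`ω_{i−1} − ωᵢ` is even and `ω′ᵢ = ω_{i−1} − 1` otherwise (0-indexed here). -/
def gAux (ω : ℕ → ℤ) : ℕ → ℤ := fun i =>
  if i = 0 then ω 0
  else if (ω (i - 1) - ω i) % 2 = 0 then ω (i - 1) else ω (i - 1) - 1

/-- `X = {i : 2 ≤ i ≤ n, ω_{i−1} ≠ ω′ᵢ}` (0-indexed: `1 ≤ i < n`). -/
def gSet (n : ℕ) (ω : ℕ → ℤ) : Finset ℕ :=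
  (Finset.Ico 1 n).filter fun i => ω (i - 1) ≠ gAux ω i

/-- `X′ = X` if `#X` is even, and `X` minus its maximal element otherwise. -/
def gSet' (n : ℕ) (ω : ℕ → ℤ) : Finset ℕ :=
  if Even (gSet n ω).card then gSet n ω
  else (gSet n ω).erase ((gSet n ω).max.unbotD 0)

/-- The map `g : ℤⁿ → ℤⁿ`: `g(ω)ᵢ = ω′ᵢ + 1` if `i ∈ X′` and `g(ω)ᵢ = ω′ᵢ` otherwise. -/
def gMap (n : ℕ) (ω : ℕ → ℤ) : ℕ → ℤ := fun i =>
  if i ∈ gSet' n ω then gAux ω i + 1 else gAux ω i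

/-- `j(ω) = #{ℓ < n : ω_ℓ ≡ ω₁ (mod 2)}`. -/
def jCount (n : ℕ) (ω : ℕ → ℤ) : ℕ :=
  ((Finset.range n).filter fun ℓ => ω ℓ % 2 = ω 0 % 2).card

lemma rankHalf (S : Finset ℕ) :
    (S.filter fun x => Even ((S.filter fun y => y ≤ x).card)).card = S.card / 2 := by
  induction S using Finset.strongInduction with
  | _ S ih =>
    rcases S.eq_empty_or_nonempty with rfl | hne
    · simp
    · set M := S.max' hne with hM
      have hMS : M ∈ S := S.max'_mem hne
      set T := S.erase M with hT
      have hTS : T ⊂ S := Finset.erase_ssubset hMS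
      have hins : insert M T = S := Finset.insert_erase hMS
      have hkey : ∀ x ∈ T, (S.filter fun y => y ≤ x) = (T.filter fun y => y ≤ x) := by
        intro x hx
        have hxM : x < M := lt_of_le_of_ne (S.le_max' x (Finset.mem_of_mem_erase hx))
          (Finset.ne_of_mem_erase hx)
        ext y
        simp only [Finset.mem_filter, hT, Finset.mem_erase]
        constructor
        · rintro ⟨hy, hyx⟩
          exact ⟨⟨by rintro rfl; omega, hy⟩, hyx⟩
        · rintro ⟨⟨_, hy⟩, hyx⟩; exact ⟨hy, hyx⟩
      have hrankM : (S.filter fun y => y ≤ M) = S :=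
        Finset.filter_true_of_mem fun y hy => S.le_max' y hy
      have hfT : (T.filter fun x => Even ((S.filter fun y => y ≤ x).card))
          = (T.filter fun x => Even ((T.filter fun y => y ≤ x).card)) := by
        apply Finset.filter_congr
        intro x hx
        rw [hkey x hx]
      have hMnT : M ∉ T := Finset.notMem_erase _ _
      have hcard : S.card = T.card + 1 := by
        rw [← hins, Finset.card_insert_of_notMem hMnT]
      have hsplit : (S.filter fun x => Even ((S.filter fun y => y ≤ x).card))
          = if Even ((S.filter fun y => y ≤ M).card)
            then insert M (T.filter fun x => Even ((S.filter fun y => y ≤ x).card))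
            else (T.filter fun x => Even ((S.filter fun y => y ≤ x).card)) := by
        rw [← hins, Finset.filter_insert]
      have ihT := ih T hTS
      rw [hsplit, hrankM]
      by_cases hE : Even S.card
      · rw [if_pos hE, Finset.card_insert_of_notMem (fun h => hMnT (Finset.mem_of_mem_filter _ h)),
          hfT, ihT]
        rw [Nat.even_iff] at hE
        omega
      · rw [if_neg hE, hfT, ihT]
        rw [Nat.even_iff] at hE
        omega

lemma gAux_mod (ω : ℕ → ℤ) (i : ℕ) : gAux ω i % 2 = ω i % 2 := by
  unfold gAux
  split_ifs with h1 h2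
  · rw [h1]
  · omega
  · omega

lemma mem_gSet (n : ℕ) (ω : ℕ → ℤ) (i : ℕ) :
    i ∈ gSet n ω ↔ 1 ≤ i ∧ i < n ∧ (ω (i - 1) - ω i) % 2 ≠ 0 := by
  unfold gSet gAux
  simp only [Finset.mem_filter, Finset.mem_Ico]
  constructor
  · rintro ⟨⟨h1, h2⟩, h3⟩
    refine ⟨h1, h2, ?_⟩
    intro he
    apply h3
    rw [if_neg (by omega), if_pos he]
  · rintro ⟨h1, h2, h3⟩
    refine ⟨⟨h1, h2⟩, ?_⟩
    rw [if_neg (by omega : ¬ i = 0), if_neg h3]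
    omega

lemma parityChain (n : ℕ) (ω : ℕ → ℤ) (i : ℕ) (hi : i < n) :
    (ω i % 2 = ω 0 % 2 ↔ Even (((gSet n ω).filter fun y => y ≤ i).card)) := by
  induction i with
  | zero =>
    have : ((gSet n ω).filter fun y => y ≤ 0) = ∅ := by
      apply Finset.filter_false_of_mem
      intro y hy
      rw [mem_gSet] at hy
      omega
    simp only [this, Finset.card_empty]
    simp
  | succ i ih =>
    have hi' : i < n := by omega
    have ih := ih hi'
    have hsplit : ((gSet n ω).filter fun y => y ≤ i + 1)
        = ((gSet n ω).filter fun y => y ≤ i) ∪ ((gSet n ω).filter fun y => y = i + 1) := by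
      rw [← Finset.filter_or]
      apply Finset.filter_congr
      intro y _
      constructor <;> intro h <;> omega
    have hdisj : Disjoint ((gSet n ω).filter fun y => y ≤ i)
        ((gSet n ω).filter fun y => y = i + 1) := by
      rw [Finset.disjoint_left]
      intro a ha hb
      rw [Finset.mem_filter] at ha hb
      omega
    have hcard : ((gSet n ω).filter fun y => y ≤ i + 1).card
        = ((gSet n ω).filter fun y => y ≤ i).card
          + ((gSet n ω).filter fun y => y = i + 1).card := by
      rw [hsplit, Finset.card_union_of_disjoint hdisj]
    by_cases hm : i + 1 ∈ gSet n ω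
    · have h1 : ((gSet n ω).filter fun y => y = i + 1) = {i + 1} := by
        ext y
        simp only [Finset.mem_filter, Finset.mem_singleton]
        constructor
        · rintro ⟨_, h⟩; exact h
        · rintro rfl; exact ⟨hm, rfl⟩
      have hodd : (ω i - ω (i+1)) % 2 ≠ 0 := by
        rw [mem_gSet] at hm
        simpa using hm.2.2
      rw [hcard, h1, Finset.card_singleton, Nat.even_add_one, ← ih]
      constructor
      · intro h h'
        omega
      · intro h
        omega
    · have h1 : ((gSet n ω).filter fun y => y = i + 1) = ∅ := by
        ext y
        simp only [Finset.mem_filter, Finset.notMem_empty, iff_false, not_and]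
        rintro hy rfl
        exact hm hy
      have heven : (ω i - ω (i+1)) % 2 = 0 := by
        by_contra h
        exact hm ((mem_gSet n ω (i+1)).2 ⟨by omega, hi, by simpa using h⟩)
      rw [hcard, h1]
      simp only [Finset.card_empty, add_zero]
      rw [← ih]
      omega

lemma gSet'_subset (n : ℕ) (ω : ℕ → ℤ) : gSet' n ω ⊆ gSet n ω := by
  unfold gSet'
  split_ifs
  · exact Finset.Subset.refl _
  · exact Finset.erase_subset _ _

lemma even_card_gSet' (n : ℕ) (ω : ℕ → ℤ) : Even (gSet' n ω).card := by
  unfold gSet'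
  split_ifs with h
  · exact h
  · have hne : (gSet n ω).Nonempty := by
      rw [Finset.nonempty_iff_ne_empty]
      intro he
      rw [he] at h
      simp at h
    have hmax : (gSet n ω).max.unbotD 0 = (gSet n ω).max' hne := by
      rw [← Finset.coe_max' hne]
      rfl
    rw [hmax, Finset.card_erase_of_mem ((gSet n ω).max'_mem hne)]
    rw [Nat.even_iff] at h ⊢
    have : 1 ≤ (gSet n ω).card := Finset.card_pos.2 hne
    omega

lemma rank_eq (n : ℕ) (ω : ℕ → ℤ) (x : ℕ) (hx : x ∈ gSet' n ω) :
    ((gSet n ω).filter fun y => y ≤ x) = ((gSet' n ω).filter fun y => y ≤ x) := by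
  unfold gSet' at hx ⊢
  split_ifs at hx ⊢ with h
  · rfl
  · have hne : (gSet n ω).Nonempty := ⟨x, Finset.mem_of_mem_erase hx⟩
    have hmax : (gSet n ω).max.unbotD 0 = (gSet n ω).max' hne := by
      rw [← Finset.coe_max' hne]
      rfl
    rw [hmax] at hx ⊢
    have hxM : x < (gSet n ω).max' hne :=
      lt_of_le_of_ne ((gSet n ω).le_max' x (Finset.mem_of_mem_erase hx))
        (Finset.ne_of_mem_erase hx)
    ext y
    simp only [Finset.mem_filter, Finset.mem_erase]
    constructor
    · rintro ⟨hy, hyx⟩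
      exact ⟨⟨by rintro rfl; omega, hy⟩, hyx⟩
    · rintro ⟨⟨_, hy⟩, hyx⟩; exact ⟨hy, hyx⟩

/-- For every dominant `ω ∈ ℤⁿ`, the parity-count statistic
`j(ω) = #{ℓ : ω_ℓ ≡ ω₁ (mod 2)}` satisfies `j(g(ω)) = j(ω)`. -/
theorem jCount_gMap (n : ℕ) (ω : ℕ → ℤ)
    (hdom : ∀ i : ℕ, i + 1 < n → ω (i + 1) ≤ ω i) :
    jCount n (gMap n ω) = jCount n ω := by
  classical
  set X' := gSet' n ω with hX'
  have hX'Ico : ∀ x ∈ X', 1 ≤ x ∧ x < n := by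
    intro x hx
    have := (mem_gSet n ω x).1 (gSet'_subset n ω hx)
    exact ⟨this.1, this.2.1⟩
  -- the key half-count
  have hhalf : 2 * (X'.filter fun x => ω x % 2 = ω 0 % 2).card = X'.card := by
    have h1 : (X'.filter fun x => ω x % 2 = ω 0 % 2)
        = (X'.filter fun x => Even ((X'.filter fun y => y ≤ x).card)) := by
      apply Finset.filter_congr
      intro x hx
      rw [← rank_eq n ω x hx]
      simpa using parityChain n ω x (hX'Ico x hx).2
    rw [h1, rankHalf]
    have h2 := even_card_gSet' n ω
    rw [← hX', Nat.even_iff] at h2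
    omega
  -- zeroth coordinate is fixed
  have h0X' : (0 : ℕ) ∉ X' := fun h => by have := hX'Ico 0 h; omega
  have h0 : gMap n ω 0 = ω 0 := by
    unfold gMap gAux
    rw [if_neg h0X', if_pos rfl]
  -- parity flip description
  have hflip : ∀ ℓ, (gMap n ω ℓ % 2 = ω 0 % 2 ↔
      ((ℓ ∈ X' ∧ ¬ (ω ℓ % 2 = ω 0 % 2)) ∨ (ℓ ∉ X' ∧ ω ℓ % 2 = ω 0 % 2))) := by
    intro ℓ
    have hg := gAux_mod ω ℓ
    unfold gMap
    by_cases h : ℓ ∈ X'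
    · rw [if_pos h]
      constructor
      · intro hh
        exact Or.inl ⟨h, by omega⟩
      · rintro (⟨_, hh⟩ | ⟨hh, _⟩)
        · omega
        · exact absurd h hh
    · rw [if_neg h]
      constructor
      · intro hh
        exact Or.inr ⟨h, by omega⟩
      · rintro (⟨hh, _⟩ | ⟨_, hh⟩)
        · exact absurd hh h
        · omega
  set A := (Finset.range n).filter fun ℓ => ω ℓ % 2 = ω 0 % 2 with hA
  have hT : ((Finset.range n).filter fun ℓ => gMap n ω ℓ % 2 = gMap n ω 0 % 2)
      = (X'.filter fun ℓ => ¬ (ω ℓ % 2 = ω 0 % 2)) ∪ (A \ X') := by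
    ext ℓ
    simp only [Finset.mem_filter, Finset.mem_union, Finset.mem_sdiff, Finset.mem_range, hA, h0]
    constructor
    · rintro ⟨hℓ, hq⟩
      rcases (hflip ℓ).1 hq with ⟨h1, h2⟩ | ⟨h1, h2⟩
      · exact Or.inl ⟨h1, h2⟩
      · exact Or.inr ⟨⟨hℓ, h2⟩, h1⟩
    · rintro (⟨h1, h2⟩ | ⟨⟨h1, h2⟩, h3⟩)
      · exact ⟨(hX'Ico ℓ h1).2, (hflip ℓ).2 (Or.inl ⟨h1, h2⟩)⟩
      · exact ⟨h1, (hflip ℓ).2 (Or.inr ⟨h3, h2⟩)⟩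
  have hdisj : Disjoint (X'.filter fun ℓ => ¬ (ω ℓ % 2 = ω 0 % 2)) (A \ X') := by
    rw [Finset.disjoint_left]
    intro a ha hb
    exact (Finset.mem_sdiff.1 hb).2 (Finset.mem_of_mem_filter _ ha)
  have hAX' : A ∩ X' = X'.filter fun ℓ => ω ℓ % 2 = ω 0 % 2 := by
    ext ℓ
    simp only [Finset.mem_inter, Finset.mem_filter, Finset.mem_range, hA]
    constructor
    · rintro ⟨⟨_, h2⟩, h3⟩
      exact ⟨h3, h2⟩
    · rintro ⟨h1, h2⟩
      exact ⟨⟨(hX'Ico ℓ h1).2, h2⟩, h1⟩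
  have hsdiff : (A \ X').card = A.card - (X'.filter fun ℓ => ω ℓ % 2 = ω 0 % 2).card := by
    have h := Finset.card_sdiff_add_card_inter A X'
    rw [hAX'] at h
    omega
  have hcompl : (X'.filter fun ℓ => ¬ (ω ℓ % 2 = ω 0 % 2)).card
      + (X'.filter fun ℓ => ω ℓ % 2 = ω 0 % 2).card = X'.card := by
    rw [add_comm]
    exact Finset.card_filter_add_card_filter_not _
  have hAle : (X'.filter fun ℓ => ω ℓ % 2 = ω 0 % 2).card ≤ A.card := by
    apply Finset.card_le_card
    intro x hx
    rw [Finset.mem_filter] at hx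
    simp only [hA, Finset.mem_filter, Finset.mem_range]
    exact ⟨(hX'Ico x hx.1).2, hx.2⟩
  unfold jCount
  rw [hT, Finset.card_union_of_disjoint hdisj, hsdiff, ← hA]
  omega
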